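/- Let B ⊂ A be an inclusion of simple unital C*-algebras with a conditional expectation of index-finite type. Then the reflection operator r⁻₁ maps A'∩A_1 onto A_1'∩A_2, i.e. r⁻₁(A'∩A_1) = A_1'∩A_2. -/

import Mathlib

open scoped TensorProduct

noncomputable section

/-- A unital C*-algebra is *simple* if it has no nontrivial closed two-sided ideals. -/
def IsSimpleCStarAlgebra (A : Type*) [Ring A] [TopologicalSpace A] : Prop :=
  ∀ I : TwoSidedIdeal A, IsClosed (I : Set A) → I = ⊥ ∨ I = ⊤

/-- A conditional expectation from the subalgebra `A` of the ambient algebra `C`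
onto its subalgebra `B`, recorded as a linear map on `C`. -/
structure CondExpOn (C : Type*) [CStarAlgebra C] (A B : StarSubalgebra ℂ C) where
  map : C →ₗ[ℂ] C
  mem_of_mem : ∀ x ∈ A, map x ∈ B
  fixes : ∀ x ∈ B, map x = x
  bimodule : ∀ b ∈ B, ∀ b' ∈ B, ∀ x ∈ A, map (b * x * b') = b * map x * b'
  star_map : ∀ x ∈ A, map (star x) = star (map x)
  positive : ∀ x ∈ A, ∃ y ∈ B, map (star x * x) = star y * y

/-- A (Watatani) quasi-basis for an expectation-like map `E` on the set `S`:
`∑ᵢ uᵢ E(uᵢ* y) = y = ∑ᵢ E(y uᵢ) uᵢ*` for all `y ∈ S`.  The existence of a quasi-basis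
is the statement that the corresponding conditional expectation is of index-finite type. -/
structure IsQuasiBasisOn {C : Type*} [CStarAlgebra C] (E : C →ₗ[ℂ] C) (S : Set C)
    {n : ℕ} (u : Fin n → C) : Prop where
  mem : ∀ i, u i ∈ S
  left : ∀ y ∈ S, ∑ i, u i * E (star (u i) * y) = y
  right : ∀ y ∈ S, ∑ i, E (y * u i) * star (u i) = y

/-- The relative commutant `M' ∩ N` inside the ambient algebra `C`. -/
def relativeCommutant {C : Type*} [CStarAlgebra C] (M N : StarSubalgebra ℂ C) :
    Submodule ℂ C where
  carrier := {x | x ∈ N ∧ ∀ m ∈ M, m * x = x * m}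
  add_mem' := fun hx hy => ⟨add_mem hx.1 hy.1,
    fun m hm => by rw [mul_add, add_mul, hx.2 m hm, hy.2 m hm]⟩
  zero_mem' := ⟨zero_mem _, fun m _ => by rw [mul_zero, zero_mul]⟩
  smul_mem' := fun c x hx => ⟨SMulMemClass.smul_mem c hx.1,
    fun m hm => by rw [mul_smul_comm, smul_mul_assoc, hx.2 m hm]⟩

/-- The pairing of two linear functionals against a tensor:
`pairT f g (a ⊗ b) = f a * g b`. -/
def pairT {C : Type*} [CStarAlgebra C] (f g : C →ₗ[ℂ] ℂ) : C ⊗[ℂ] C →ₗ[ℂ] ℂ :=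
  (TensorProduct.lid ℂ ℂ).toLinearMap ∘ₗ TensorProduct.map f g

/-- `(ε ⊗ id)` applied to a tensor. -/
def counitL {C : Type*} [CStarAlgebra C] (ε : C →ₗ[ℂ] ℂ) : C ⊗[ℂ] C →ₗ[ℂ] C :=
  (TensorProduct.lid ℂ C).toLinearMap ∘ₗ TensorProduct.map ε LinearMap.id

/-- `(id ⊗ ε)` applied to a tensor. -/
def counitR {C : Type*} [CStarAlgebra C] (ε : C →ₗ[ℂ] ℂ) : C ⊗[ℂ] C →ₗ[ℂ] C :=
  (TensorProduct.rid ℂ C).toLinearMap ∘ₗ TensorProduct.map LinearMap.id ε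

/-- Sweedler expression `t ↦ ε(t₍₁₎ w) t₍₂₎`; applied to `Δ(1)` this is the
target counital map `ε^t(w) = ε(1₍₁₎ w) 1₍₂₎`. -/
def ctarget {C : Type*} [CStarAlgebra C] (ε : C →ₗ[ℂ] ℂ) (w : C) : C ⊗[ℂ] C →ₗ[ℂ] C :=
  (TensorProduct.lid ℂ C).toLinearMap ∘ₗ
    TensorProduct.map (ε ∘ₗ LinearMap.mulRight ℂ w) LinearMap.id

/-- Sweedler expression `t ↦ t₍₁₎ ε(w t₍₂₎)`; applied to `Δ(1)` this is the
source counital map `ε^s(w) = 1₍₁₎ ε(w 1₍₂₎)`. -/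
def csource {C : Type*} [CStarAlgebra C] (ε : C →ₗ[ℂ] ℂ) (w : C) : C ⊗[ℂ] C →ₗ[ℂ] C :=
  (TensorProduct.rid ℂ C).toLinearMap ∘ₗ
    TensorProduct.map LinearMap.id (ε ∘ₗ LinearMap.mulLeft ℂ w)

/-- The tower `B ⊆ A ⊆ A₁ ⊆ A₂` of iterated C*-basic constructions associated to an
inclusion `B ⊆ A` of simple unital C*-algebras (all realized inside an ambient unital
C*-algebra `C`), together with:  the minimal conditional expectations `E₀ : A → B`,
`E₁ : A₁ → A`, `E₂ : A₂ → A₁`, all of index-finite type;  a quasi-basis `lam` for `E₀`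
with scalar index `τ⁻¹` (minimal, i.e. of smallest index);  the Jones projections
`e₁, e₂`;  the Markov-type trace `tr` given on `B' ∩ A₂` by `E₀ ∘ E₁ ∘ E₂`;  and a
quasi-basis `u` for the restriction of `E₁` to the relative commutant `A' ∩ A₁`, whose
Watatani index `k = ∑ uᵢuᵢ*` is invertible with inverse `kinv`. -/
structure JonesTower (C : Type*) [CStarAlgebra C] where
  B : StarSubalgebra ℂ C
  A : StarSubalgebra ℂ C
  A1 : StarSubalgebra ℂ C
  A2 : StarSubalgebra ℂ C
  hBA : B ≤ A
  hAA1 : A ≤ A1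
  hA1A2 : A1 ≤ A2
  simpleB : IsSimpleCStarAlgebra B
  simpleA : IsSimpleCStarAlgebra A
  E0 : CondExpOn C A B
  E1 : CondExpOn C A1 A
  E2 : CondExpOn C A2 A1
  τ : ℝ
  τ_pos : 0 < τ
  nl : ℕ
  lam : Fin nl → C
  lam_qb : IsQuasiBasisOn E0.map (A : Set C) lam
  qb1 : ∃ (n : ℕ) (v : Fin n → C), IsQuasiBasisOn E1.map (A1 : Set C) v
  qb2 : ∃ (n : ℕ) (v : Fin n → C), IsQuasiBasisOn E2.map (A2 : Set C) v
  lam_index : ∑ i, lam i * star (lam i) = ((τ⁻¹ : ℝ) : ℂ) • 1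
  E0_minimal : ∀ (E' : CondExpOn C A B) (n : ℕ) (v : Fin n → C) (c : ℝ),
      IsQuasiBasisOn E'.map (A : Set C) v →
      (∑ i, v i * star (v i)) = ((c : ℝ) : ℂ) • 1 → τ⁻¹ ≤ c
  e1 : C
  e2 : C
  e1_mem : e1 ∈ A1
  e2_mem : e2 ∈ A2
  e1_star : star e1 = e1
  e2_star : star e2 = e2
  e1_idem : e1 * e1 = e1
  e2_idem : e2 * e2 = e2
  e1_comm : ∀ b ∈ B, e1 * b = b * e1
  e2_comm : ∀ a ∈ A, e2 * a = a * e2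
  e1_jones : ∀ x ∈ A, e1 * x * e1 = E0.map x * e1
  e2_jones : ∀ x ∈ A1, e2 * x * e2 = E1.map x * e2
  E1_e1 : E1.map e1 = ((τ : ℝ) : ℂ) • 1
  E2_e2 : E2.map e2 = ((τ : ℝ) : ℂ) • 1
  gen1 : A1 = (StarAlgebra.adjoin ℂ ((A : Set C) ∪ {e1})).topologicalClosure
  gen2 : A2 = (StarAlgebra.adjoin ℂ ((A1 : Set C) ∪ {e2})).topologicalClosure
  tr : C →ₗ[ℂ] ℂ
  tr_def : ∀ x ∈ A2, (∀ b ∈ B, b * x = x * b) →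
      E0.map (E1.map (E2.map x)) = tr x • 1
  nu : ℕ
  u : Fin nu → C
  u_qb : IsQuasiBasisOn E1.map {x | x ∈ A1 ∧ ∀ a ∈ A, a * x = x * a} u
  kinv : C
  kinv_k : kinv * (∑ i, u i * star (u i)) = 1
  k_kinv : (∑ i, u i * star (u i)) * kinv = 1

namespace JonesTower

variable {C : Type*} [CStarAlgebra C] (T : JonesTower C)

/-- The relative commutant `P = B' ∩ A₁`. -/
def P : Submodule ℂ C := relativeCommutant T.B T.A1

/-- The relative commutant `Q = A' ∩ A₂`. -/
def Q : Submodule ℂ C := relativeCommutant T.A T.A2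

/-- `k = Ind_W (E₁|_{A' ∩ A₁}) = ∑ᵢ uᵢ uᵢ*`, the Watatani index of the restriction of
`E₁` to `A' ∩ A₁`. -/
def k : C := ∑ i, T.u i * star (T.u i)

/-- `d = ‖k‖₂ = tr(k* k)^{1/2}`. -/
def d : ℝ := Real.sqrt (T.tr (star T.k * T.k)).re

/-- The Nikshych–Vainerman pairing `⟨x, w⟩ = d τ⁻² tr(x e₂ e₁ w)`. -/
def pairNV (x w : C) : ℂ :=
  (T.d : ℂ) * ((T.τ : ℂ)⁻¹) ^ 2 * T.tr (x * T.e2 * T.e1 * w)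

/-- The NV pairing as a linear functional in its second variable. -/
def pairL (x : C) : C →ₗ[ℂ] ℂ :=
  ((T.d : ℂ) * ((T.τ : ℂ)⁻¹) ^ 2) • (T.tr ∘ₗ LinearMap.mulLeft ℂ (x * T.e2 * T.e1))

/-- The NV pairing as a linear functional in its first variable. -/
def pairR (w : C) : C →ₗ[ℂ] ℂ :=
  ((T.d : ℂ) * ((T.τ : ℂ)⁻¹) ^ 2) • (T.tr ∘ₗ LinearMap.mulRight ℂ (T.e2 * (T.e1 * w)))

/-- The subspace `Q ⊗ Q` of `C ⊗ C`. -/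
def QQ : Submodule ℂ (C ⊗[ℂ] C) :=
  Submodule.span ℂ {t | ∃ a ∈ T.Q, ∃ b ∈ T.Q, t = a ⊗ₜ[ℂ] b}

/-- The subspace `P ⊗ P` of `C ⊗ C`. -/
def PP : Submodule ℂ (C ⊗[ℂ] C) :=
  Submodule.span ℂ {t | ∃ a ∈ T.P, ∃ b ∈ T.P, t = a ⊗ₜ[ℂ] b}

/-- The reflection operator `r⁻₁(w) = τ⁻² ∑ᵢ λᵢ e₁ e₂ E₂(w e₁ e₂ λᵢ*)`. -/
def rminus (w : C) : C :=
  (((T.τ : ℂ)⁻¹) ^ 2) •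
    ∑ i, T.lam i * T.e1 * T.e2 * T.E2.map (w * T.e1 * T.e2 * star (T.lam i))

/-- The reflection operator `r⁺₁(x) = τ⁻¹ ∑ᵢ E₁(e₁ λᵢ x) e₁ λᵢ*`. -/
def rplus (x : C) : C :=
  ((T.τ : ℂ)⁻¹) • ∑ i, T.E1.map (T.e1 * T.lam i * x) * T.e1 * star (T.lam i)

/-- The inclusion `B ⊆ A` has depth 2: `(B' ∩ A₁) e₂ (B' ∩ A₁) = B' ∩ A₂`
(as linear spans). -/
def DepthTwo : Prop :=
  Submodule.span ℂ {z | ∃ x ∈ T.P, ∃ y ∈ T.P, z = x * T.e2 * y} =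
    relativeCommutant T.B T.A2

/-- The comultiplication, counit and antipode on `Q = A' ∩ A₂` determined by the
Nikshych–Vainerman pairing:  `⟨x₁x₂, w⟩ = ⟨x₁, w₍₁₎⟩⟨x₂, w₍₂₎⟩`,  `ε(w) = ⟨1, w⟩`, and
`⟨x, S(w)⟩ = conj ⟨x*, w*⟩`. -/
structure NVData where
  Δ : C →ₗ[ℂ] C ⊗[ℂ] C
  ε : C →ₗ[ℂ] ℂ
  S : C →ₗ[ℂ] C
  Δ_mem : ∀ w ∈ T.Q, Δ w ∈ T.QQ
  S_mem : ∀ w ∈ T.Q, S w ∈ T.Q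
  Δ_pair : ∀ x₁ ∈ T.P, ∀ x₂ ∈ T.P, ∀ w ∈ T.Q,
      T.pairNV (x₁ * x₂) w = pairT (T.pairL x₁) (T.pairL x₂) (Δ w)
  ε_pair : ∀ w ∈ T.Q, ε w = T.pairNV 1 w
  S_pair : ∀ x ∈ T.P, ∀ w ∈ T.Q,
      T.pairNV x (S w) = starRingEnd ℂ (T.pairNV (star x) (star w))

variable {T}

/-- The deformed comultiplication `Δ̃(w) = d (1 ⊗ k⁻¹) Δ(w)`. -/
def tΔ (D : T.NVData) : C →ₗ[ℂ] C ⊗[ℂ] C :=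
  (T.d : ℂ) • ((LinearMap.mulLeft ℂ ((1 : C) ⊗ₜ[ℂ] T.kinv)) ∘ₗ D.Δ)

/-- The deformed counit `ε̃(w) = d⁻¹ ε(k w)`. -/
def tε (D : T.NVData) : C →ₗ[ℂ] ℂ :=
  ((T.d : ℂ))⁻¹ • (D.ε ∘ₗ LinearMap.mulLeft ℂ T.k)

/-- The deformed antipode `S̃(w) = S(k w k⁻¹)`. -/
def tS (D : T.NVData) : C →ₗ[ℂ] C :=
  D.S ∘ₗ (LinearMap.mulRight ℂ T.kinv ∘ₗ LinearMap.mulLeft ℂ T.k)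

end JonesTower

/-- `(Q, Δ, ε, S)` is a weak C*-Hopf algebra, where `Q` is a (necessarily
finite-dimensional) subspace of the ambient C*-algebra `C`, `dag` is the involution of
`Q` and `dagT` is the induced componentwise involution of `Q ⊗ Q`.  This records:
`Q` is a unital algebra, `dag` is an (isometrically positive-definite, i.e. C*-)
involution, `Δ` is a `dag`-preserving algebra map, `(Q, Δ, ε)` is a coalgebra,
the weak bialgebra axioms for `ε` and `Δ(1)`, and the antipode axioms for `S`. -/
structure IsWeakCStarHopfOn {C : Type*} [CStarAlgebra C]
    (Qc : Submodule ℂ C) (QQc : Submodule ℂ (C ⊗[ℂ] C))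
    (dag : C →ₛₗ[starRingEnd ℂ] C) (dagT : C ⊗[ℂ] C → C ⊗[ℂ] C)
    (Δ : C →ₗ[ℂ] C ⊗[ℂ] C) (ε : C →ₗ[ℂ] ℂ) (S : C →ₗ[ℂ] C) : Prop where
  one_mem : (1 : C) ∈ Qc
  mul_mem : ∀ w ∈ Qc, ∀ w' ∈ Qc, w * w' ∈ Qc
  findim : FiniteDimensional ℂ Qc
  dag_mem : ∀ w ∈ Qc, dag w ∈ Qc
  dag_invol : ∀ w ∈ Qc, dag (dag w) = w
  dag_mul : ∀ w ∈ Qc, ∀ w' ∈ Qc, dag (w * w') = dag w' * dag w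
  dag_cstar : ∀ w ∈ Qc, dag w * w = 0 → w = 0
  Δ_mem : ∀ w ∈ Qc, Δ w ∈ QQc
  S_mem : ∀ w ∈ Qc, S w ∈ Qc
  Δ_mul : ∀ w ∈ Qc, ∀ w' ∈ Qc, Δ (w * w') = Δ w * Δ w'
  Δ_star : ∀ w ∈ Qc, Δ (dag w) = dagT (Δ w)
  coassoc : ∀ w ∈ Qc,
      (TensorProduct.assoc ℂ C C C) ((TensorProduct.map Δ LinearMap.id) (Δ w))
        = (TensorProduct.map LinearMap.id Δ) (Δ w)
  counit_left : ∀ w ∈ Qc, counitL ε (Δ w) = w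
  counit_right : ∀ w ∈ Qc, counitR ε (Δ w) = w
  eps_weak : ∀ w ∈ Qc, ∀ w' ∈ Qc, ∀ w'' ∈ Qc,
      ε (w * w' * w'') =
        pairT (ε ∘ₗ LinearMap.mulLeft ℂ w) (ε ∘ₗ LinearMap.mulRight ℂ w'') (Δ w')
  eps_weak' : ∀ w ∈ Qc, ∀ w' ∈ Qc, ∀ w'' ∈ Qc,
      ε (w * w' * w'') =
        pairT (ε ∘ₗ LinearMap.mulRight ℂ w'') (ε ∘ₗ LinearMap.mulLeft ℂ w) (Δ w')
  delta_one_left :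
      (TensorProduct.assoc ℂ C C C).symm ((TensorProduct.map LinearMap.id Δ) (Δ 1))
        = ((Δ 1) ⊗ₜ[ℂ] (1 : C)) *
            ((TensorProduct.assoc ℂ C C C).symm ((1 : C) ⊗ₜ[ℂ] (Δ 1)))
  delta_one_right :
      (TensorProduct.assoc ℂ C C C).symm ((TensorProduct.map LinearMap.id Δ) (Δ 1))
        = ((TensorProduct.assoc ℂ C C C).symm ((1 : C) ⊗ₜ[ℂ] (Δ 1))) *
            ((Δ 1) ⊗ₜ[ℂ] (1 : C))
  antipode_left : ∀ w ∈ Qc,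
      LinearMap.mul' ℂ C ((TensorProduct.map LinearMap.id S) (Δ w)) = ctarget ε w (Δ 1)
  antipode_right : ∀ w ∈ Qc,
      LinearMap.mul' ℂ C ((TensorProduct.map S LinearMap.id) (Δ w)) = csource ε w (Δ 1)
  antipode_mid : ∀ w ∈ Qc,
      LinearMap.mul' ℂ C
        ((TensorProduct.map (LinearMap.mul' ℂ C ∘ₗ TensorProduct.map S LinearMap.id) S)
          ((TensorProduct.map Δ LinearMap.id) (Δ w))) = S w

/-- A left action of a weak C*-Hopf algebra `(Hc, Δ, ε, S, dag)` (realized inside the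
ambient algebra `C`) on the C*-subalgebra `Ac`, given as a bilinear map `act`. -/
structure IsWeakHopfActionOn {C : Type*} [CStarAlgebra C]
    (Hc : Submodule ℂ C) (Ac : StarSubalgebra ℂ C)
    (Δ : C →ₗ[ℂ] C ⊗[ℂ] C) (ε : C →ₗ[ℂ] ℂ) (S : C →ₗ[ℂ] C) (dag : C → C)
    (act : C →ₗ[ℂ] C →ₗ[ℂ] C) : Prop where
  act_mem : ∀ y ∈ Hc, ∀ a ∈ Ac, act y a ∈ Ac
  one_act : ∀ a ∈ Ac, act 1 a = a
  mul_act : ∀ y ∈ Hc, ∀ y' ∈ Hc, ∀ a ∈ Ac, act (y * y') a = act y (act y' a)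
  leibniz : ∀ y ∈ Hc, ∀ a ∈ Ac, ∀ a' ∈ Ac,
      act y (a * a') =
        LinearMap.mul' ℂ C ((TensorProduct.map (act.flip a) (act.flip a')) (Δ y))
  star_act : ∀ y ∈ Hc, ∀ a ∈ Ac, star (act y a) = act (dag (S y)) (star a)
  unit_act : ∀ y ∈ Hc, act y 1 = act (ctarget ε y (Δ 1)) 1
  unit_act_zero : ∀ y ∈ Hc, (act y 1 = 0 ↔ ctarget ε y (Δ 1) = 0)
/-- The conjugate-linear involution `w ↦ gi (star w) g` of `C` (for `gi = g⁻¹` this is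
the involution `w† = g⁻¹ w* g`). -/
def conjStar {C : Type*} [CStarAlgebra C] (g gi : C) : C →ₛₗ[starRingEnd ℂ] C where
  toFun w := gi * star w * g
  map_add' w w' := by (try dsimp only); rw [star_add, mul_add, add_mul]
  map_smul' c w := by
    simp only [star_smul, mul_smul_comm, smul_mul_assoc, starRingEnd_apply]

/-- The map `(x, a) ↦ x₍₁₎ a S(x₍₂₎)`, as a bilinear map, built from a comultiplication
`Δ` and an antipode `S`. -/
def hopfAct {C : Type*} [CStarAlgebra C] (Δ : C →ₗ[ℂ] C ⊗[ℂ] C) (S : C →ₗ[ℂ] C) :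
    C →ₗ[ℂ] C →ₗ[ℂ] C :=
  LinearMap.mk₂ ℂ
    (fun x a =>
      LinearMap.mul' ℂ C ((TensorProduct.map ((LinearMap.mul ℂ C).flip a) S) (Δ x)))
    (fun x x' a => by simp)
    (fun c x a => by simp)
    (fun x a a' => by simp [TensorProduct.map_add_left])
    (fun c x a => by simp [TensorProduct.map_smul_left])

namespace JonesTower

variable {C : Type*} [CStarAlgebra C]

/-- The action `w ▷ x = τ⁻¹ E₂(w x e₂)` of `Q = A' ∩ A₂` on `A₁`, as a bilinear map. -/
def qact (T : JonesTower C) : C →ₗ[ℂ] C →ₗ[ℂ] C :=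
  LinearMap.mk₂ ℂ (fun w x => (T.τ : ℂ)⁻¹ • T.E2.map (w * x * T.e2))
    (fun w w' x => by (try dsimp only); rw [add_mul, add_mul, map_add, smul_add])
    (fun c w x => by (try dsimp only); rw [smul_mul_assoc, smul_mul_assoc, map_smul, smul_comm])
    (fun w x x' => by (try dsimp only); rw [mul_add, add_mul, map_add, smul_add])
    (fun c w x => by (try dsimp only); rw [mul_smul_comm, smul_mul_assoc, map_smul, smul_comm])

/-- The weak C*-Hopf algebra structure `(Δ_P, ε_P, S_P)` on `P = B' ∩ A₁` which is dual,
via the Nikshych–Vainerman pairing, to the deformed weak C*-Hopf algebra structure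
`(Q, Δ̃, ε̃, S̃)`:  the multiplication of `P` is dual to `Δ̃`, the comultiplication of `P`
is dual to the multiplication of `Q`, the counit of `P` is evaluation against `1 ∈ Q`,
the unit of `P` pairs as `ε̃`, and the antipode of `P` is dual to `S̃`. -/
structure DualData (T : JonesTower C) (D : T.NVData) where
  ΔP : C →ₗ[ℂ] C ⊗[ℂ] C
  εP : C →ₗ[ℂ] ℂ
  SP : C →ₗ[ℂ] C
  ΔP_mem : ∀ x ∈ T.P, ΔP x ∈ T.PP
  SP_mem : ∀ x ∈ T.P, SP x ∈ T.P
  mul_dual : ∀ x ∈ T.P, ∀ x' ∈ T.P, ∀ w ∈ T.Q,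
      T.pairNV (x * x') w = pairT (T.pairL x) (T.pairL x') (tΔ D w)
  ΔP_dual : ∀ x ∈ T.P, ∀ w ∈ T.Q, ∀ w' ∈ T.Q,
      pairT (T.pairR w) (T.pairR w') (ΔP x) = T.pairNV x (w * w')
  εP_dual : ∀ x ∈ T.P, εP x = T.pairNV x 1
  one_dual : ∀ w ∈ T.Q, T.pairNV 1 w = tε D w
  SP_dual : ∀ x ∈ T.P, ∀ w ∈ T.Q, T.pairNV (SP x) w = T.pairNV x (tS D w)

end JonesTower


open StarAlgebra in
/-- A nonnegative element of a closed star subalgebra has a square root in it. -/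
theorem sqrt_mem_closed {C : Type*} [CStarAlgebra C] (S : StarSubalgebra ℂ C)
    (hS : IsClosed (S : Set C)) {y : C} (hy : y ∈ S)
    (hsa : IsSelfAdjoint y) (hspec : ∀ r ∈ spectrum ℝ y, 0 ≤ r) :
    ∃ c ∈ S, star c * c = y := by
  haveI : IsStarNormal y := hsa.isStarNormal
  let D := elemental ℂ y
  haveI hD : IsClosed (D : Set C) := elemental.isClosed ℂ y
  let yD : D := ⟨y, elemental.self_mem ℂ y⟩
  have hyD : IsSelfAdjoint yD := by
    rw [isSelfAdjoint_iff] at hsa ⊢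
    exact Subtype.ext hsa
  have hspecD : ∀ r ∈ spectrum ℝ yD, 0 ≤ r := by
    intro r hr
    apply hspec
    rw [← spectrum.preimage_algebraMap (R := ℝ) ℂ] at hr ⊢
    rw [Set.mem_preimage] at hr ⊢
    rwa [StarSubalgebra.spectrum_eq (hS := hD) (a := yD)] at hr
  have hrestrict : SpectrumRestricts yD ContinuousMap.realToNNReal :=
    SpectrumRestricts.nnreal_iff.mpr hspecD
  obtain ⟨x, hx_sa, -, hx_sq⟩ :=
    CFC.exists_sqrt_of_isSelfAdjoint_of_quasispectrumRestricts hyD hrestrict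
  refine ⟨(x : C), elemental.le_of_mem hS hy x.2, ?_⟩
  have h2 : ((x ^ 2 : D) : C) = y := by rw [sq, hx_sq]
  have hs : star (x : C) = (x : C) := by
    rw [← StarMemClass.coe_star]
    exact congrArg Subtype.val hx_sa.star_eq
  rw [← h2]
  push_cast [sq]
  rw [hs]

/-- If `a + t•b` is a sum of squares for every real `t`, with `b` selfadjoint, then `b = 0`. -/
theorem zero_of_forall_nonneg {C : Type*} [CStarAlgebra C] {a b : C}
    (hb : IsSelfAdjoint b)
    (h : ∀ t : ℝ, ∃ c : C, a + (t : ℂ) • b = star c * c) : b = 0 := by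
  letI := CStarAlgebra.spectralOrder C
  haveI := CStarAlgebra.spectralOrderedRing C
  have hpos : ∀ t : ℝ, (0 : C) ≤ a + (t : ℂ) • b := by
    intro t
    obtain ⟨c, hc⟩ := h t
    rw [hc]
    exact star_mul_self_nonneg c
  have ha : (0 : C) ≤ a := by simpa using hpos 0
  have hbnd : ∀ t : ℝ, ‖(t : ℂ) • b‖ ≤ 3 * ‖a‖ := by
    intro t
    have h1 : (0 : C) ≤ a + (t : ℂ) • b := hpos t
    have h2 : (0 : C) ≤ a - (t : ℂ) • b := by
      have := hpos (-t)
      rwa [Complex.ofReal_neg, neg_smul, ← sub_eq_add_neg] at this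
    have h3 : a + (t : ℂ) • b ≤ a + a := by
      have : (t : ℂ) • b ≤ a := by rwa [← sub_nonneg]
      exact add_le_add_right this a
    have h4 : ‖a + (t : ℂ) • b‖ ≤ ‖a + a‖ :=
      CStarAlgebra.norm_le_norm_of_nonneg_of_le h1 h3
    calc ‖(t : ℂ) • b‖ = ‖(a + (t : ℂ) • b) - a‖ := by rw [add_sub_cancel_left]
      _ ≤ ‖a + (t : ℂ) • b‖ + ‖a‖ := norm_sub_le _ _
      _ ≤ ‖a + a‖ + ‖a‖ := by linarith
      _ ≤ (‖a‖ + ‖a‖) + ‖a‖ := by linarith [norm_add_le a a]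
      _ = 3 * ‖a‖ := by ring
  by_contra hb0
  have hbn : 0 < ‖b‖ := norm_pos_iff.mpr hb0
  set t : ℝ := (3 * ‖a‖ + 1) / ‖b‖ with ht
  have htpos : 0 < t := by positivity
  have := hbnd t
  rw [norm_smul] at this
  have hnt : ‖(t : ℂ)‖ = t := by
    rw [Complex.norm_real, Real.norm_of_nonneg htpos.le]
  rw [hnt, ht, div_mul_cancel₀ _ hbn.ne'] at this
  linarith

section CondExp

variable {C : Type*} [CStarAlgebra C] {Aa Bb : StarSubalgebra ℂ C}

theorem condexp_orth (E : CondExpOn C Aa Bb) {x y : C} (hx : x ∈ Aa) (hy : y ∈ Aa)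
    (h : E.map (star x * x) = 0) : E.map (star y * x) = 0 := by
  have key : ∀ u ∈ Aa, E.map (star u * x) + E.map (star x * u) = 0 := by
    intro u hu
    apply zero_of_forall_nonneg (a := E.map (star u * u))
    · -- selfadjointness
      rw [IsSelfAdjoint, star_add]
      rw [← E.star_map _ (mul_mem (star_mem hu) hx), ← E.star_map _ (mul_mem (star_mem hx) hu)]
      rw [star_mul, star_star, star_mul, star_star]
      exact add_comm _ _
    · intro t
      have hmem : u + (t : ℂ) • x ∈ Aa := add_mem hu (SMulMemClass.smul_mem _ hx)
      obtain ⟨c, _, hc⟩ := E.positive _ hmem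
      refine ⟨c, ?_⟩
      rw [← hc]
      have expand : star (u + (t : ℂ) • x) * (u + (t : ℂ) • x)
          = star u * u + ((t : ℂ) • (star u * x) + ((t : ℂ) • (star x * u)
            + ((t : ℂ) * (t : ℂ)) • (star x * x))) := by
        rw [star_add, star_smul, Complex.star_def, Complex.conj_ofReal]
        rw [add_mul, mul_add, mul_add, smul_mul_assoc, smul_mul_assoc,
          mul_smul_comm, mul_smul_comm, smul_smul]
        ring_nf
        abel
      rw [expand, map_add, map_add, map_add, map_smul, map_smul, map_smul, h,
        smul_zero, add_zero, smul_add]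
  have h1 := key y hy
  have h2 := key (Complex.I • y) (SMulMemClass.smul_mem _ hy)
  have e1 : star (Complex.I • y) * x = (-Complex.I) • (star y * x) := by
    rw [star_smul, Complex.star_def, Complex.conj_I, smul_mul_assoc, neg_smul]
  have e2 : star x * (Complex.I • y) = Complex.I • (star x * y) := by
    rw [mul_smul_comm]
  rw [e1, e2, map_smul, map_smul] at h2
  set c := E.map (star y * x) with hcdef
  set d := E.map (star x * y) with hddef
  have hc : c = -d := add_eq_zero_iff_eq_neg.mp h1
  have h2' : Complex.I • d + Complex.I • d = 0 := by
    rw [hc] at h2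
    simpa [smul_neg, neg_smul, neg_neg] using h2
  have h2'' : (2 : ℂ) • d = 0 := by
    have hI : Complex.I • (d + d) = 0 := by rw [smul_add]; exact h2'
    rcases smul_eq_zero.mp hI with h' | h'
    · exact absurd h' Complex.I_ne_zero
    · rw [two_smul]; exact h'
  have hd0 : d = 0 := by
    rcases smul_eq_zero.mp h2'' with h' | h'
    · exact absurd h' two_ne_zero
    · exact h'
  rw [hc, hd0, neg_zero]

theorem condexp_faithful (E : CondExpOn C Aa Bb) {n : ℕ} {v : Fin n → C}
    (hv : IsQuasiBasisOn E.map (Aa : Set C) v) {x : C} (hx : x ∈ Aa)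
    (h : E.map (star x * x) = 0) : x = 0 := by
  rw [← hv.left x hx]
  apply Finset.sum_eq_zero
  intro i _
  rw [condexp_orth E hx (hv.mem i) h, mul_zero]

end CondExp

theorem mul_rot {C : Type*} [Monoid C] {b x : C} (h : b * x = x * b) (y : C) :
    b * (x * y) = x * (b * y) := by rw [← mul_assoc, h, mul_assoc]

theorem mem_algebra_adjoin_of_star_closed {C : Type*} [CStarAlgebra C] {s : Set C}
    (hstar : star s ⊆ s) {x : C} (hx : x ∈ StarAlgebra.adjoin ℂ s) :
    x ∈ Algebra.adjoin ℂ s := by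
  have h1 : x ∈ Algebra.adjoin ℂ (s ∪ star s) := by
    rw [← StarAlgebra.adjoin_toSubalgebra]
    exact hx
  have hle : Algebra.adjoin ℂ (s ∪ star s) ≤ Algebra.adjoin ℂ s :=
    Algebra.adjoin_le (Set.union_subset Algebra.subset_adjoin
      (hstar.trans Algebra.subset_adjoin))
  exact hle h1

namespace JonesTower

variable {C : Type*} [CStarAlgebra C] (T : JonesTower C)

theorem tau_ne : (T.τ : ℂ) ≠ 0 := Complex.ofReal_ne_zero.mpr T.τ_pos.ne'

theorem lam_A (i : Fin T.nl) : T.lam i ∈ T.A := T.lam_qb.mem i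

theorem lam_A1 (i : Fin T.nl) : T.lam i ∈ T.A1 := T.hAA1 (T.lam_qb.mem i)

theorem e1_A2 : T.e1 ∈ T.A2 := T.hA1A2 T.e1_mem

theorem e1_idem' (X : C) : T.e1 * (T.e1 * X) = T.e1 * X := by
  rw [← mul_assoc, T.e1_idem]

theorem e2_idem' (X : C) : T.e2 * (T.e2 * X) = T.e2 * X := by
  rw [← mul_assoc, T.e2_idem]

theorem e1_jones' {x : C} (hx : x ∈ T.A) (X : C) :
    T.e1 * (x * (T.e1 * X)) = T.E0.map x * (T.e1 * X) := by
  calc T.e1 * (x * (T.e1 * X)) = (T.e1 * x * T.e1) * X := by simp only [mul_assoc]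
    _ = (T.E0.map x * T.e1) * X := by rw [T.e1_jones x hx]
    _ = T.E0.map x * (T.e1 * X) := by rw [mul_assoc]

theorem e2_jones' {x : C} (hx : x ∈ T.A1) (X : C) :
    T.e2 * (x * (T.e2 * X)) = T.E1.map x * (T.e2 * X) := by
  calc T.e2 * (x * (T.e2 * X)) = (T.e2 * x * T.e2) * X := by simp only [mul_assoc]
    _ = (T.E1.map x * T.e2) * X := by rw [T.e2_jones x hx]
    _ = T.E1.map x * (T.e2 * X) := by rw [mul_assoc]

theorem e2e1e2' (X : C) : T.e2 * (T.e1 * (T.e2 * X)) = (T.τ : ℂ) • (T.e2 * X) := by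
  rw [T.e2_jones' T.e1_mem X, T.E1_e1, smul_mul_assoc, one_mul]

theorem e2e1e2 : T.e2 * T.e1 * T.e2 = (T.τ : ℂ) • T.e2 := by
  have := T.e2e1e2' 1
  simpa only [mul_one, ← mul_assoc] using this

theorem E2_e2_left {y : C} (hy : y ∈ T.A1) : T.E2.map (T.e2 * y) = (T.τ : ℂ) • y := by
  have h := T.E2.bimodule 1 (one_mem _) y hy T.e2 T.e2_mem
  rw [one_mul, one_mul] at h
  rw [h, T.E2_e2, smul_mul_assoc, one_mul]

theorem E2_mid {b b' : C} (hb : b ∈ T.A1) (hb' : b' ∈ T.A1) :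
    T.E2.map (b * T.e2 * b') = (T.τ : ℂ) • (b * b') := by
  rw [T.E2.bimodule b hb b' hb' T.e2 T.e2_mem, T.E2_e2]
  rw [mul_smul_comm, smul_mul_assoc, mul_one]

theorem e1e2e1 : T.e1 * T.e2 * T.e1 = (T.τ : ℂ) • T.e1 := by
  obtain ⟨n, v, hv⟩ := T.qb2
  have hgA2 : T.e1 * T.e2 * T.e1 ∈ T.A2 := mul_mem (mul_mem T.e1_A2 T.e2_mem) T.e1_A2
  have hxA2 : T.e1 * T.e2 * T.e1 - (T.τ : ℂ) • T.e1 ∈ T.A2 :=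
    sub_mem hgA2 (SMulMemClass.smul_mem _ T.e1_A2)
  have hstar_g : star (T.e1 * T.e2 * T.e1) = T.e1 * T.e2 * T.e1 := by
    simp only [star_mul, T.e1_star, T.e2_star, mul_assoc]
  have hstar_x : star (T.e1 * T.e2 * T.e1 - (T.τ : ℂ) • T.e1)
      = T.e1 * T.e2 * T.e1 - (T.τ : ℂ) • T.e1 := by
    rw [star_sub, hstar_g, star_smul, Complex.star_def, Complex.conj_ofReal, T.e1_star]
  have h1 : T.e1 * T.e2 * T.e1 * T.e1 = T.e1 * T.e2 * T.e1 := by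
    rw [mul_assoc (T.e1 * T.e2) T.e1 T.e1, T.e1_idem]
  have h2 : T.e1 * (T.e1 * T.e2 * T.e1) = T.e1 * T.e2 * T.e1 := by
    rw [← mul_assoc, ← mul_assoc, T.e1_idem]
  have h3 : (T.e1 * T.e2 * T.e1) * (T.e1 * T.e2 * T.e1)
      = (T.τ : ℂ) • (T.e1 * T.e2 * T.e1) := by
    calc (T.e1 * T.e2 * T.e1) * (T.e1 * T.e2 * T.e1)
        = T.e1 * (T.e2 * (T.e1 * (T.e1 * (T.e2 * T.e1)))) := by simp only [mul_assoc]
      _ = T.e1 * (T.e2 * (T.e1 * (T.e2 * T.e1))) := by rw [T.e1_idem']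
      _ = T.e1 * ((T.τ : ℂ) • (T.e2 * T.e1)) := by rw [T.e2e1e2']
      _ = (T.τ : ℂ) • (T.e1 * (T.e2 * T.e1)) := by rw [mul_smul_comm]
      _ = (T.τ : ℂ) • (T.e1 * T.e2 * T.e1) := by rw [mul_assoc]
  have hE2g : T.E2.map (T.e1 * T.e2 * T.e1) = (T.τ : ℂ) • T.e1 := by
    rw [T.E2.bimodule T.e1 T.e1_mem T.e1 T.e1_mem T.e2 T.e2_mem, T.E2_e2]
    rw [mul_smul_comm, smul_mul_assoc, mul_one, T.e1_idem]
  have hxx : (T.e1 * T.e2 * T.e1 - (T.τ : ℂ) • T.e1) * (T.e1 * T.e2 * T.e1 - (T.τ : ℂ) • T.e1)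
      = ((T.τ : ℂ) * (T.τ : ℂ)) • T.e1 - (T.τ : ℂ) • (T.e1 * T.e2 * T.e1) := by
    rw [sub_mul, mul_sub, mul_sub, h3, mul_smul_comm, h1, smul_mul_assoc, h2,
      smul_mul_assoc, mul_smul_comm, smul_smul, T.e1_idem]
    abel
  have hE2xx : T.E2.map (star (T.e1 * T.e2 * T.e1 - (T.τ : ℂ) • T.e1) *
      (T.e1 * T.e2 * T.e1 - (T.τ : ℂ) • T.e1)) = 0 := by
    rw [hstar_x, hxx, map_sub, map_smul, map_smul, hE2g,
      T.E2.fixes T.e1 T.e1_mem, smul_smul, sub_self]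
  have := condexp_faithful T.E2 hv hxA2 hE2xx
  exact sub_eq_zero.mp this

theorem e1e2e1' (X : C) : T.e1 * (T.e2 * (T.e1 * X)) = (T.τ : ℂ) • (T.e1 * X) := by
  calc T.e1 * (T.e2 * (T.e1 * X)) = (T.e1 * T.e2 * T.e1) * X := by simp only [mul_assoc]
    _ = ((T.τ : ℂ) • T.e1) * X := by rw [T.e1e2e1]
    _ = (T.τ : ℂ) • (T.e1 * X) := by rw [smul_mul_assoc]

theorem p_mem : (∑ i, T.lam i * T.e1 * star (T.lam i)) ∈ T.A1 :=
  sum_mem fun i _ => mul_mem (mul_mem (T.lam_A1 i) T.e1_mem) (star_mem (T.lam_A1 i))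

theorem p_one : ∑ i, T.lam i * T.e1 * star (T.lam i) = 1 := by
  obtain ⟨n, v, hv⟩ := T.qb1
  have hterm : ∀ i j, (T.lam i * T.e1 * star (T.lam i)) * (T.lam j * T.e1 * star (T.lam j))
      = T.lam i * T.E0.map (star (T.lam i) * T.lam j) * T.e1 * star (T.lam j) := by
    intro i j
    calc (T.lam i * T.e1 * star (T.lam i)) * (T.lam j * T.e1 * star (T.lam j))
        = T.lam i * (T.e1 * ((star (T.lam i) * T.lam j) * (T.e1 * star (T.lam j)))) := by
          simp only [mul_assoc]
      _ = T.lam i * (T.E0.map (star (T.lam i) * T.lam j) * (T.e1 * star (T.lam j))) := by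
          rw [T.e1_jones' (mul_mem (star_mem (T.lam_A i)) (T.lam_A j))]
      _ = T.lam i * T.E0.map (star (T.lam i) * T.lam j) * T.e1 * star (T.lam j) := by
          simp only [mul_assoc]
  have hpp : (∑ i, T.lam i * T.e1 * star (T.lam i)) * (∑ i, T.lam i * T.e1 * star (T.lam i))
      = ∑ i, T.lam i * T.e1 * star (T.lam i) := by
    rw [Finset.sum_mul]
    calc ∑ i, (T.lam i * T.e1 * star (T.lam i)) * (∑ j, T.lam j * T.e1 * star (T.lam j))
        = ∑ i, ∑ j, T.lam i * T.E0.map (star (T.lam i) * T.lam j) * T.e1 * star (T.lam j) := by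
          refine Finset.sum_congr rfl fun i _ => ?_
          rw [Finset.mul_sum]
          exact Finset.sum_congr rfl fun j _ => hterm i j
      _ = ∑ j, ∑ i, T.lam i * T.E0.map (star (T.lam i) * T.lam j) * T.e1 * star (T.lam j) :=
          Finset.sum_comm
      _ = ∑ j, T.lam j * T.e1 * star (T.lam j) := by
          refine Finset.sum_congr rfl fun j _ => ?_
          have hs : ∑ i, T.lam i * T.E0.map (star (T.lam i) * T.lam j) * T.e1 * star (T.lam j)
              = (∑ i, T.lam i * T.E0.map (star (T.lam i) * T.lam j)) * T.e1 * star (T.lam j) := by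
            rw [Finset.sum_mul, Finset.sum_mul]
          rw [hs, T.lam_qb.left (T.lam j) (T.lam_A j)]
  have hpstar : star (∑ i, T.lam i * T.e1 * star (T.lam i))
      = ∑ i, T.lam i * T.e1 * star (T.lam i) := by
    rw [star_sum]
    refine Finset.sum_congr rfl fun i _ => ?_
    simp only [star_mul, star_star, T.e1_star, mul_assoc]
  have hE1p : T.E1.map (∑ i, T.lam i * T.e1 * star (T.lam i)) = 1 := by
    rw [map_sum]
    have hcg : ∀ i ∈ Finset.univ, T.E1.map (T.lam i * T.e1 * star (T.lam i))
        = (T.τ : ℂ) • (T.lam i * star (T.lam i)) := by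
      intro i _
      rw [T.E1.bimodule (T.lam i) (T.lam_A i) (star (T.lam i)) (star_mem (T.lam_A i))
        T.e1 T.e1_mem, T.E1_e1, mul_smul_comm, smul_mul_assoc, mul_one]
    rw [Finset.sum_congr rfl hcg, ← Finset.smul_sum, T.lam_index, smul_smul,
      Complex.ofReal_inv, mul_inv_cancel₀ T.tau_ne, one_smul]
  have hqA1 : (1 : C) - ∑ i, T.lam i * T.e1 * star (T.lam i) ∈ T.A1 :=
    sub_mem (one_mem _) T.p_mem
  have hq2 : ((1 : C) - ∑ i, T.lam i * T.e1 * star (T.lam i)) *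
      ((1 : C) - ∑ i, T.lam i * T.e1 * star (T.lam i))
      = (1 : C) - ∑ i, T.lam i * T.e1 * star (T.lam i) := by
    rw [mul_sub, sub_mul, sub_mul, hpp]
    simp only [one_mul, mul_one]
    abel
  have hqstar : star ((1 : C) - ∑ i, T.lam i * T.e1 * star (T.lam i))
      = (1 : C) - ∑ i, T.lam i * T.e1 * star (T.lam i) := by
    rw [star_sub, star_one, hpstar]
  have hE1q : T.E1.map (star ((1 : C) - ∑ i, T.lam i * T.e1 * star (T.lam i)) *
      ((1 : C) - ∑ i, T.lam i * T.e1 * star (T.lam i))) = 0 := by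
    rw [hqstar, hq2, map_sub, T.E1.fixes 1 (one_mem _), hE1p, sub_self]
  have h0 := condexp_faithful T.E1 hv hqA1 hE1q
  exact (sub_eq_zero.mp h0).symm

theorem conj_comm (X : C) (hX : ∀ b ∈ T.B, b * X = X * b) {a : C} (ha : a ∈ T.A) :
    a * ∑ i, T.lam i * X * star (T.lam i) = (∑ i, T.lam i * X * star (T.lam i)) * a := by
  rw [Finset.mul_sum, Finset.sum_mul]
  have key : ∀ i : Fin T.nl, a * (T.lam i * X * star (T.lam i))
      = ∑ j, (T.lam j * X) * (T.E0.map ((star (T.lam j) * a) * T.lam i) * star (T.lam i)) := by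
    intro i
    have h1 : a * (T.lam i * X * star (T.lam i)) = (a * T.lam i) * (X * star (T.lam i)) := by
      simp only [mul_assoc]
    rw [h1, ← T.lam_qb.left (a * T.lam i) (mul_mem ha (T.lam_A i)), Finset.sum_mul]
    refine Finset.sum_congr rfl fun j _ => ?_
    have hbB : T.E0.map (star (T.lam j) * (a * T.lam i)) ∈ T.B :=
      T.E0.mem_of_mem _ (mul_mem (star_mem (T.lam_A j)) (mul_mem ha (T.lam_A i)))
    have hcomm := hX _ hbB
    calc (T.lam j * T.E0.map (star (T.lam j) * (a * T.lam i))) * (X * star (T.lam i))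
        = T.lam j * ((T.E0.map (star (T.lam j) * (a * T.lam i)) * X) * star (T.lam i)) := by
          simp only [mul_assoc]
      _ = T.lam j * ((X * T.E0.map (star (T.lam j) * (a * T.lam i))) * star (T.lam i)) := by
          rw [hcomm]
      _ = (T.lam j * X) * (T.E0.map (star (T.lam j) * (a * T.lam i)) * star (T.lam i)) := by
          simp only [mul_assoc]
      _ = (T.lam j * X) * (T.E0.map ((star (T.lam j) * a) * T.lam i) * star (T.lam i)) := by
          rw [mul_assoc (star (T.lam j)) a (T.lam i)]
  calc ∑ i, a * (T.lam i * X * star (T.lam i))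
      = ∑ i, ∑ j, (T.lam j * X) *
          (T.E0.map ((star (T.lam j) * a) * T.lam i) * star (T.lam i)) :=
        Finset.sum_congr rfl fun i _ => key i
    _ = ∑ j, ∑ i, (T.lam j * X) *
          (T.E0.map ((star (T.lam j) * a) * T.lam i) * star (T.lam i)) := Finset.sum_comm
    _ = ∑ j, (T.lam j * X) * (star (T.lam j) * a) := by
        refine Finset.sum_congr rfl fun j _ => ?_
        rw [← Finset.mul_sum,
          T.lam_qb.right (star (T.lam j) * a) (mul_mem (star_mem (T.lam_A j)) ha)]
    _ = ∑ j, (T.lam j * X * star (T.lam j)) * a := by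
        refine Finset.sum_congr rfl fun j _ => ?_
        simp only [mul_assoc]

theorem comm_A1 {r : C} (hA : ∀ a ∈ T.A, a * r = r * a) (he1 : T.e1 * r = r * T.e1) :
    ∀ m ∈ T.A1, m * r = r * m := by
  intro m hm
  have hstarcl : star ((T.A : Set C) ∪ {T.e1}) ⊆ ((T.A : Set C) ∪ {T.e1}) := by
    intro x hx
    rw [Set.mem_star] at hx
    rcases hx with h | h
    · left
      have h' : star x ∈ T.A := h
      have h'' : star (star x) ∈ T.A := star_mem h'
      rwa [star_star] at h''
    · right
      rw [Set.mem_singleton_iff] at h ⊢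
      rw [← star_star x, h, T.e1_star]
  have hsub : ((StarAlgebra.adjoin ℂ ((T.A : Set C) ∪ {T.e1}) : StarSubalgebra ℂ C) : Set C)
      ⊆ {x : C | x * r = r * x} := by
    intro x hx
    have hx' : x ∈ Algebra.adjoin ℂ ((T.A : Set C) ∪ {T.e1}) :=
      mem_algebra_adjoin_of_star_closed hstarcl hx
    clear hx
    induction hx' using Algebra.adjoin_induction with
    | mem y hy =>
      rcases hy with hyA | hye
      · exact hA y hyA
      · rw [Set.mem_singleton_iff] at hye
        subst hye
        exact he1
    | algebraMap c => exact Algebra.commutes c r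
    | add y z _ _ hy hz =>
      simp only [Set.mem_setOf_eq] at hy hz ⊢
      rw [add_mul, mul_add, hy, hz]
    | mul y z _ _ hy hz =>
      simp only [Set.mem_setOf_eq] at hy hz ⊢
      rw [mul_assoc, hz, ← mul_assoc, hy, mul_assoc]
  have hK : IsClosed {x : C | x * r = r * x} := by
    have heq : {x : C | x * r = r * x} = (fun x => x * r - r * x) ⁻¹' {0} := by
      ext x
      simp [sub_eq_zero]
    rw [heq]
    exact IsClosed.preimage
      ((continuous_id.mul continuous_const).sub (continuous_const.mul continuous_id))
      isClosed_singleton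
  have hm' : m ∈ closure
      ((StarAlgebra.adjoin ℂ ((T.A : Set C) ∪ {T.e1}) : StarSubalgebra ℂ C) : Set C) := by
    rw [T.gen1] at hm
    exact hm
  exact closure_minimal hsub hK hm'

theorem A2_closed : IsClosed (T.A2 : Set C) := by
  rw [T.gen2]
  exact (StarAlgebra.adjoin ℂ ((T.A1 : Set C) ∪ {T.e2})).isClosed_topologicalClosure

theorem E2_bound : ∀ x ∈ T.A2, ‖T.E2.map x‖ ≤ 6 * ‖x‖ := by
  rcases subsingleton_or_nontrivial C with hsub | hnt
  · intro x _
    rw [Subsingleton.elim (T.E2.map x) 0, norm_zero]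
    positivity
  letI := CStarAlgebra.spectralOrder C
  haveI := CStarAlgebra.spectralOrderedRing C
  have hpos : ∀ y ∈ T.A2, 0 ≤ y → 0 ≤ T.E2.map y := by
    intro y hy hy0
    have hsa : IsSelfAdjoint y := .of_nonneg hy0
    have hspec : ∀ r ∈ spectrum ℝ y, 0 ≤ r := fun r hr =>
      spectrum_nonneg_of_nonneg hy0 hr
    obtain ⟨c, hcA2, hc⟩ := sqrt_mem_closed T.A2 T.A2_closed hy hsa hspec
    obtain ⟨d, -, hd⟩ := T.E2.positive c hcA2
    rw [← hc, hd]
    exact star_mul_self_nonneg d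
  have hsa_bound : ∀ x ∈ T.A2, IsSelfAdjoint x → ‖T.E2.map x‖ ≤ 3 * ‖x‖ := by
    intro x hx hsa
    have halgmem : ∀ r : ℝ, algebraMap ℝ C r ∈ T.A2 := by
      intro r
      rw [IsScalarTower.algebraMap_apply ℝ ℂ C]
      exact algebraMap_mem _ _
    have halgmem1 : ∀ r : ℝ, algebraMap ℝ C r ∈ T.A1 := by
      intro r
      rw [IsScalarTower.algebraMap_apply ℝ ℂ C]
      exact algebraMap_mem _ _
    have hu0 : 0 ≤ algebraMap ℝ C ‖x‖ - x := sub_nonneg.mpr hsa.le_algebraMap_norm_self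
    have hv0 : 0 ≤ algebraMap ℝ C ‖x‖ + x := by
      have h := hsa.neg_algebraMap_norm_le_self
      have h2 := sub_nonneg.mpr h
      rwa [sub_neg_eq_add, add_comm] at h2
    have hEu := hpos _ (sub_mem (halgmem _) hx) hu0
    have hEv := hpos _ (add_mem (halgmem _) hx) hv0
    have hfix : ∀ r : ℝ, T.E2.map (algebraMap ℝ C r) = algebraMap ℝ C r := fun r =>
      T.E2.fixes _ (halgmem1 r)
    have hsum : T.E2.map (algebraMap ℝ C ‖x‖ - x) + T.E2.map (algebraMap ℝ C ‖x‖ + x)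
        = algebraMap ℝ C (2 * ‖x‖) := by
      rw [map_sub, map_add, hfix]
      have : (2 : ℝ) * ‖x‖ = ‖x‖ + ‖x‖ := by ring
      rw [this, map_add]
      abel
    have hle : T.E2.map (algebraMap ℝ C ‖x‖ - x) ≤ algebraMap ℝ C (2 * ‖x‖) := by
      rw [← hsum]
      exact le_add_of_nonneg_right hEv
    have hnorm1 : ‖T.E2.map (algebraMap ℝ C ‖x‖ - x)‖ ≤ 2 * ‖x‖ := by
      have := CStarAlgebra.norm_le_norm_of_nonneg_of_le hEu hle
      rwa [norm_algebraMap', Real.norm_of_nonneg (by positivity)] at this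
    have hrepr : T.E2.map x = algebraMap ℝ C ‖x‖ - T.E2.map (algebraMap ℝ C ‖x‖ - x) := by
      rw [map_sub, hfix]
      abel
    calc ‖T.E2.map x‖
        = ‖algebraMap ℝ C ‖x‖ - T.E2.map (algebraMap ℝ C ‖x‖ - x)‖ := by rw [← hrepr]
      _ ≤ ‖algebraMap ℝ C ‖x‖‖ + ‖T.E2.map (algebraMap ℝ C ‖x‖ - x)‖ := norm_sub_le _ _
      _ ≤ ‖x‖ + 2 * ‖x‖ := by
          have h1 : ‖algebraMap ℝ C ‖x‖‖ = ‖x‖ := by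
            rw [norm_algebraMap', Real.norm_of_nonneg (norm_nonneg x)]
          rw [h1]
          linarith [hnorm1]
      _ = 3 * ‖x‖ := by ring
  intro x hx
  have hu : x + star x ∈ T.A2 := add_mem hx (star_mem hx)
  have hv : Complex.I • (x - star x) ∈ T.A2 :=
    SMulMemClass.smul_mem _ (sub_mem hx (star_mem hx))
  have husa : IsSelfAdjoint (x + star x) := by
    rw [IsSelfAdjoint, star_add, star_star, add_comm]
  have hvsa : IsSelfAdjoint (Complex.I • (x - star x)) := by
    rw [IsSelfAdjoint, star_smul, Complex.star_def, Complex.conj_I, star_sub, star_star,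
      neg_smul, ← smul_neg, neg_sub]
  have hxdecomp : T.E2.map x = (2⁻¹ : ℂ) • (T.E2.map (x + star x)
      - Complex.I • T.E2.map (Complex.I • (x - star x))) := by
    rw [← map_smul, ← map_sub, ← map_smul]
    congr 1
    rw [smul_smul, smul_sub, smul_smul]
    have hII : Complex.I * Complex.I = -1 := Complex.I_mul_I
    rw [hII]
    module
  have hnu : ‖x + star x‖ ≤ 2 * ‖x‖ := by
    calc ‖x + star x‖ ≤ ‖x‖ + ‖star x‖ := norm_add_le _ _
      _ = 2 * ‖x‖ := by rw [norm_star]; ring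
  have hnv : ‖Complex.I • (x - star x)‖ ≤ 2 * ‖x‖ := by
    rw [norm_smul, Complex.norm_I, one_mul]
    calc ‖x - star x‖ ≤ ‖x‖ + ‖star x‖ := norm_sub_le _ _
      _ = 2 * ‖x‖ := by rw [norm_star]; ring
  have h1 := hsa_bound _ hu husa
  have h2 := hsa_bound _ hv hvsa
  rw [hxdecomp, norm_smul]
  have h3 : ‖(2⁻¹ : ℂ)‖ = 2⁻¹ := by
    rw [norm_inv]
    norm_num
  rw [h3]
  have h4 : ‖T.E2.map (x + star x) - Complex.I • T.E2.map (Complex.I • (x - star x))‖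
      ≤ 3 * (2 * ‖x‖) + 3 * (2 * ‖x‖) := by
    calc ‖T.E2.map (x + star x) - Complex.I • T.E2.map (Complex.I • (x - star x))‖
        ≤ ‖T.E2.map (x + star x)‖ + ‖Complex.I • T.E2.map (Complex.I • (x - star x))‖ :=
          norm_sub_le _ _
      _ ≤ 3 * (2 * ‖x‖) + 3 * (2 * ‖x‖) := by
          rw [norm_smul, Complex.norm_I, one_mul]
          have := le_trans h1 (by linarith : 3 * ‖x + star x‖ ≤ 3 * (2 * ‖x‖))
          have := le_trans h2 (by linarith : 3 * ‖Complex.I • (x - star x)‖ ≤ 3 * (2 * ‖x‖))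
          linarith
  linarith [h4]

theorem adjoin2_le_A2 :
    (StarAlgebra.adjoin ℂ ((T.A1 : Set C) ∪ {T.e2}) : StarSubalgebra ℂ C) ≤ T.A2 := by
  rw [T.gen2]
  exact StarSubalgebra.le_topologicalClosure _

theorem pushdown : ∀ x ∈ T.A2, T.e2 * x = (T.τ : ℂ)⁻¹ • (T.e2 * T.E2.map (T.e2 * x)) := by
  have hstarcl2 : star ((T.A1 : Set C) ∪ {T.e2}) ⊆ ((T.A1 : Set C) ∪ {T.e2}) := by
    intro x hx
    rw [Set.mem_star] at hx
    rcases hx with h | h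
    · left
      have h' : star x ∈ T.A1 := h
      have h'' : star (star x) ∈ T.A1 := star_mem h'
      rwa [star_star] at h''
    · right
      rw [Set.mem_singleton_iff] at h ⊢
      rw [← star_star x, h, T.e2_star]
  have hred : ∀ x ∈ Algebra.adjoin ℂ ((T.A1 : Set C) ∪ {T.e2}), ∀ y ∈ T.A1,
      ∃ y' ∈ T.A1, T.e2 * (y * x) = T.e2 * y' := by
    intro x hx
    induction hx using Algebra.adjoin_induction with
    | mem z hz =>
      intro y hy
      rcases hz with hzA | hze
      · exact ⟨y * z, mul_mem hy hzA, rfl⟩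
      · rw [Set.mem_singleton_iff] at hze
        subst hze
        refine ⟨T.E1.map y, T.hAA1 (T.E1.mem_of_mem y hy), ?_⟩
        have h := T.e2_jones' hy 1
        rw [mul_one] at h
        rw [h]
        exact (T.e2_comm _ (T.E1.mem_of_mem y hy)).symm
    | algebraMap c =>
      intro y hy
      exact ⟨y * algebraMap ℂ C c, mul_mem hy (algebraMap_mem _ c), rfl⟩
    | add x1 x2 _ _ h1 h2 =>
      intro y hy
      obtain ⟨y1, hy1, he1⟩ := h1 y hy
      obtain ⟨y2, hy2, he2⟩ := h2 y hy
      exact ⟨y1 + y2, add_mem hy1 hy2, by rw [mul_add, mul_add, he1, he2, mul_add]⟩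
    | mul x1 x2 _ _ h1 h2 =>
      intro y hy
      obtain ⟨y1, hy1, he1⟩ := h1 y hy
      obtain ⟨y2, hy2, he2⟩ := h2 y1 hy1
      refine ⟨y2, hy2, ?_⟩
      have hassoc : T.e2 * (y * (x1 * x2)) = (T.e2 * (y * x1)) * x2 := by
        simp only [mul_assoc]
      rw [hassoc, he1, mul_assoc, he2]
  have key0 : ∀ x ∈ StarAlgebra.adjoin ℂ ((T.A1 : Set C) ∪ {T.e2}),
      T.e2 * x = (T.τ : ℂ)⁻¹ • (T.e2 * T.E2.map (T.e2 * x)) := by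
    intro x hx
    obtain ⟨y, hyA1, hey⟩ :=
      hred x (mem_algebra_adjoin_of_star_closed hstarcl2 hx) 1 (one_mem _)
    rw [one_mul] at hey
    rw [hey, T.E2_e2_left hyA1, mul_smul_comm, smul_smul,
      inv_mul_cancel₀ T.tau_ne, one_smul]
  intro z hz
  have hz' : z ∈ closure
      ((StarAlgebra.adjoin ℂ ((T.A1 : Set C) ∪ {T.e2}) : StarSubalgebra ℂ C) : Set C) := by
    rw [T.gen2] at hz
    exact hz
  set K : ℝ := ‖T.e2‖ + ‖(T.τ : ℂ)⁻¹‖ * ‖T.e2‖ * (6 * ‖T.e2‖) with hK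
  have hK0 : 0 ≤ K := by positivity
  have hmain : ∀ ε : ℝ, 0 < ε →
      ‖T.e2 * z - (T.τ : ℂ)⁻¹ • (T.e2 * T.E2.map (T.e2 * z))‖ ≤ K * ε := by
    intro ε hε
    obtain ⟨x, hxD, hdist⟩ := Metric.mem_closure_iff.mp hz' ε hε
    have hxA2 : x ∈ T.A2 := T.adjoin2_le_A2 hxD
    have hnzx : ‖z - x‖ ≤ ε := by
      rw [← dist_eq_norm]
      exact le_of_lt hdist
    have hfx := key0 x hxD
    have hdiff : T.e2 * z - (T.τ : ℂ)⁻¹ • (T.e2 * T.E2.map (T.e2 * z))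
        = T.e2 * (z - x) - (T.τ : ℂ)⁻¹ • (T.e2 * T.E2.map (T.e2 * (z - x))) := by
      rw [mul_sub, map_sub, mul_sub, smul_sub, ← hfx]
      abel
    rw [hdiff]
    have hm2 : T.e2 * (z - x) ∈ T.A2 := mul_mem T.e2_mem (sub_mem hz hxA2)
    have hEbd := T.E2_bound _ hm2
    have hnzx2 : ‖T.e2 * (z - x)‖ ≤ ‖T.e2‖ * ε := by
      calc ‖T.e2 * (z - x)‖ ≤ ‖T.e2‖ * ‖z - x‖ := norm_mul_le _ _
        _ ≤ ‖T.e2‖ * ε := by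
            have := norm_nonneg T.e2
            nlinarith
    calc ‖T.e2 * (z - x) - (T.τ : ℂ)⁻¹ • (T.e2 * T.E2.map (T.e2 * (z - x)))‖
        ≤ ‖T.e2 * (z - x)‖ + ‖(T.τ : ℂ)⁻¹ • (T.e2 * T.E2.map (T.e2 * (z - x)))‖ :=
          norm_sub_le _ _
      _ ≤ ‖T.e2‖ * ε + ‖(T.τ : ℂ)⁻¹‖ * (‖T.e2‖ * (6 * (‖T.e2‖ * ε))) := by
          have hb1 : ‖(T.τ : ℂ)⁻¹ • (T.e2 * T.E2.map (T.e2 * (z - x)))‖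
              ≤ ‖(T.τ : ℂ)⁻¹‖ * (‖T.e2‖ * (6 * (‖T.e2‖ * ε))) := by
            rw [norm_smul]
            have hb2 : ‖T.e2 * T.E2.map (T.e2 * (z - x))‖ ≤ ‖T.e2‖ * (6 * (‖T.e2‖ * ε)) := by
              calc ‖T.e2 * T.E2.map (T.e2 * (z - x))‖
                  ≤ ‖T.e2‖ * ‖T.E2.map (T.e2 * (z - x))‖ := norm_mul_le _ _
                _ ≤ ‖T.e2‖ * (6 * (‖T.e2‖ * ε)) := by
                    have h6 : ‖T.E2.map (T.e2 * (z - x))‖ ≤ 6 * (‖T.e2‖ * ε) := by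
                      have := norm_nonneg (T.e2 * (z-x))
                      nlinarith [hEbd, hnzx2]
                    nlinarith [norm_nonneg T.e2, h6]
            nlinarith [norm_nonneg ((T.τ : ℂ)⁻¹), hb2]
          linarith
      _ ≤ K * ε := by
          rw [hK]
          nlinarith [norm_nonneg T.e2, norm_nonneg ((T.τ : ℂ)⁻¹)]
  have hzero : ‖T.e2 * z - (T.τ : ℂ)⁻¹ • (T.e2 * T.E2.map (T.e2 * z))‖ = 0 := by
    by_contra hne
    have hpos' : 0 < ‖T.e2 * z - (T.τ : ℂ)⁻¹ • (T.e2 * T.E2.map (T.e2 * z))‖ :=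
      lt_of_le_of_ne (norm_nonneg _) (Ne.symm hne)
    set w := ‖T.e2 * z - (T.τ : ℂ)⁻¹ • (T.e2 * T.E2.map (T.e2 * z))‖
    have hε : (0:ℝ) < w / (2 * (K + 1)) := by positivity
    have hwle := hmain _ hε
    have hKp : (0:ℝ) < 2 * (K + 1) := by linarith
    have h3 := mul_le_mul_of_nonneg_right hwle (le_of_lt hKp)
    have h4 : K * (w / (2 * (K + 1))) * (2 * (K + 1)) = K * w := by
      field_simp
    rw [h4] at h3
    nlinarith [hpos', hK0]
  have := norm_eq_zero.mp hzero
  exact sub_eq_zero.mp this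

theorem rminus_eq {w : C} (hw : w ∈ T.A1) :
    T.rminus w = (T.τ : ℂ)⁻¹ • ∑ i, T.lam i * T.e1 * T.e2 * (w * T.e1 * star (T.lam i)) := by
  rw [rminus]
  have hterm : ∀ i : Fin T.nl,
      T.lam i * T.e1 * T.e2 * T.E2.map (w * T.e1 * T.e2 * star (T.lam i))
      = (T.τ : ℂ) • (T.lam i * T.e1 * T.e2 * (w * T.e1 * star (T.lam i))) := by
    intro i
    rw [T.E2_mid (mul_mem hw T.e1_mem) (star_mem (T.lam_A1 i)), mul_smul_comm]
  rw [Finset.sum_congr rfl fun i _ => hterm i, ← Finset.smul_sum, smul_smul]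
  congr 1
  have h := T.tau_ne
  field_simp

theorem rminus_forward {w : C} (hw : w ∈ relativeCommutant T.A T.A1) :
    T.rminus w ∈ relativeCommutant T.A1 T.A2 := by
  have hwA1 : w ∈ T.A1 := hw.1
  have hwcomm : ∀ a ∈ T.A, a * w = w * a := hw.2
  have hsum_eq : ∑ i, T.lam i * T.e1 * T.e2 * (w * T.e1 * star (T.lam i))
      = ∑ i, T.lam i * (T.e1 * (T.e2 * (w * T.e1))) * star (T.lam i) := by
    refine Finset.sum_congr rfl fun i _ => ?_
    simp only [mul_assoc]
  have hX : ∀ b ∈ T.B, b * (T.e1 * (T.e2 * (w * T.e1)))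
      = (T.e1 * (T.e2 * (w * T.e1))) * b := by
    intro b hb
    have hbA : b ∈ T.A := T.hBA hb
    have h1 : b * T.e1 = T.e1 * b := (T.e1_comm b hb).symm
    have h2 : b * T.e2 = T.e2 * b := (T.e2_comm b hbA).symm
    have h3 : b * w = w * b := hwcomm b hbA
    calc b * (T.e1 * (T.e2 * (w * T.e1)))
        = T.e1 * (b * (T.e2 * (w * T.e1))) := mul_rot h1 _
      _ = T.e1 * (T.e2 * (b * (w * T.e1))) := by rw [mul_rot h2]
      _ = T.e1 * (T.e2 * (w * (b * T.e1))) := by rw [mul_rot h3]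
      _ = T.e1 * (T.e2 * (w * (T.e1 * b))) := by rw [h1]
      _ = (T.e1 * (T.e2 * (w * T.e1))) * b := by simp only [mul_assoc]
  -- commutes with A
  have hA : ∀ a ∈ T.A, a * T.rminus w = T.rminus w * a := by
    intro a ha
    rw [T.rminus_eq hwA1, hsum_eq, mul_smul_comm, smul_mul_assoc,
      T.conj_comm _ hX ha]
  -- e1 * s = X = s * e1
  have hs_e1 : T.e1 * ∑ i, T.lam i * (T.e1 * (T.e2 * (w * T.e1))) * star (T.lam i)
      = T.e1 * (T.e2 * (w * T.e1)) := by
    rw [Finset.mul_sum]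
    have hterm : ∀ i : Fin T.nl,
        T.e1 * (T.lam i * (T.e1 * (T.e2 * (w * T.e1))) * star (T.lam i))
        = T.e1 * (T.e2 * (w * (T.e1 * (T.E0.map (T.lam i) * star (T.lam i))))) := by
      intro i
      have hb : T.E0.map (T.lam i) ∈ T.B := T.E0.mem_of_mem _ (T.lam_A i)
      have hbA : T.E0.map (T.lam i) ∈ T.A := T.hBA hb
      have h1 : T.E0.map (T.lam i) * T.e1 = T.e1 * T.E0.map (T.lam i) :=
        (T.e1_comm _ hb).symm
      have h2 : T.E0.map (T.lam i) * T.e2 = T.e2 * T.E0.map (T.lam i) :=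
        (T.e2_comm _ hbA).symm
      have h3 : T.E0.map (T.lam i) * w = w * T.E0.map (T.lam i) := by
        rw [← hwcomm _ hbA]
      calc T.e1 * (T.lam i * (T.e1 * (T.e2 * (w * T.e1))) * star (T.lam i))
          = T.e1 * (T.lam i * (T.e1 * (T.e2 * (w * (T.e1 * star (T.lam i)))))) := by
            simp only [mul_assoc]
        _ = T.E0.map (T.lam i) * (T.e1 * (T.e2 * (w * (T.e1 * star (T.lam i))))) := by
            rw [T.e1_jones' (T.lam_A i)]
        _ = T.e1 * (T.E0.map (T.lam i) * (T.e2 * (w * (T.e1 * star (T.lam i))))) := mul_rot h1 _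
        _ = T.e1 * (T.e2 * (T.E0.map (T.lam i) * (w * (T.e1 * star (T.lam i))))) := by
            rw [mul_rot h2]
        _ = T.e1 * (T.e2 * (w * (T.E0.map (T.lam i) * (T.e1 * star (T.lam i))))) := by
            rw [mul_rot h3]
        _ = T.e1 * (T.e2 * (w * (T.e1 * (T.E0.map (T.lam i) * star (T.lam i))))) := by
            rw [mul_rot h1]
    rw [Finset.sum_congr rfl fun i _ => hterm i]
    rw [← Finset.mul_sum, ← Finset.mul_sum, ← Finset.mul_sum, ← Finset.mul_sum]
    have hqb : ∑ i, T.E0.map (T.lam i) * star (T.lam i) = 1 := by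
      have := T.lam_qb.right 1 (one_mem _)
      simpa only [one_mul] using this
    rw [hqb, mul_one]
  have he1_s : (∑ i, T.lam i * (T.e1 * (T.e2 * (w * T.e1))) * star (T.lam i)) * T.e1
      = T.e1 * (T.e2 * (w * T.e1)) := by
    rw [Finset.sum_mul]
    have hterm : ∀ i : Fin T.nl,
        (T.lam i * (T.e1 * (T.e2 * (w * T.e1))) * star (T.lam i)) * T.e1
        = (T.lam i * T.E0.map (star (T.lam i))) * (T.e1 * (T.e2 * (w * T.e1))) := by
      intro i
      have hb : T.E0.map (star (T.lam i)) ∈ T.B := T.E0.mem_of_mem _ (star_mem (T.lam_A i))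
      have hbA : T.E0.map (star (T.lam i)) ∈ T.A := T.hBA hb
      have h1 : T.E0.map (star (T.lam i)) * T.e1 = T.e1 * T.E0.map (star (T.lam i)) :=
        (T.e1_comm _ hb).symm
      have h2 : T.E0.map (star (T.lam i)) * T.e2 = T.e2 * T.E0.map (star (T.lam i)) :=
        (T.e2_comm _ hbA).symm
      have h3 : T.E0.map (star (T.lam i)) * w = w * T.E0.map (star (T.lam i)) := by
        rw [← hwcomm _ hbA]
      have hinner : T.e1 * (star (T.lam i) * T.e1) = T.E0.map (star (T.lam i)) * T.e1 := by
        rw [← mul_assoc, T.e1_jones _ (star_mem (T.lam_A i))]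
      calc (T.lam i * (T.e1 * (T.e2 * (w * T.e1))) * star (T.lam i)) * T.e1
          = T.lam i * (T.e1 * (T.e2 * (w * (T.e1 * (star (T.lam i) * T.e1))))) := by
            simp only [mul_assoc]
        _ = T.lam i * (T.e1 * (T.e2 * (w * (T.E0.map (star (T.lam i)) * T.e1)))) := by
            rw [hinner]
        _ = T.lam i * (T.e1 * (T.e2 * (T.E0.map (star (T.lam i)) * (w * T.e1)))) := by
            rw [← mul_rot h3]
        _ = T.lam i * (T.e1 * (T.E0.map (star (T.lam i)) * (T.e2 * (w * T.e1)))) := by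
            rw [← mul_rot h2]
        _ = T.lam i * (T.E0.map (star (T.lam i)) * (T.e1 * (T.e2 * (w * T.e1)))) := by
            rw [← mul_rot h1]
        _ = (T.lam i * T.E0.map (star (T.lam i))) * (T.e1 * (T.e2 * (w * T.e1))) := by
            rw [mul_assoc]
    rw [Finset.sum_congr rfl fun i _ => hterm i, ← Finset.sum_mul]
    have hqb : ∑ i, T.lam i * T.E0.map (star (T.lam i)) = 1 := by
      have := T.lam_qb.left 1 (one_mem _)
      simpa only [mul_one] using this
    rw [hqb, one_mul]
  have he1 : T.e1 * T.rminus w = T.rminus w * T.e1 := by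
    rw [T.rminus_eq hwA1, hsum_eq, mul_smul_comm, smul_mul_assoc, hs_e1, he1_s]
  refine ⟨?_, fun m hm => T.comm_A1 hA he1 m hm⟩
  rw [T.rminus_eq hwA1]
  refine SMulMemClass.smul_mem _ (sum_mem fun i _ => ?_)
  exact mul_mem (mul_mem (mul_mem (T.hA1A2 (T.lam_A1 i)) T.e1_A2) T.e2_mem)
    (mul_mem (mul_mem (T.hA1A2 hwA1) T.e1_A2) (T.hA1A2 (star_mem (T.lam_A1 i))))

theorem rminus_backward {z : C} (hz : z ∈ relativeCommutant T.A1 T.A2) :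
    ∃ w ∈ relativeCommutant T.A T.A1, T.rminus w = z := by
  have hzA2 : z ∈ T.A2 := hz.1
  have hzc : ∀ m ∈ T.A1, m * z = z * m := hz.2
  have he2z : T.e2 * z ∈ T.A2 := mul_mem T.e2_mem hzA2
  refine ⟨(T.τ : ℂ)⁻¹ • T.E2.map (T.e2 * z), ⟨?_, ?_⟩, ?_⟩
  · exact SMulMemClass.smul_mem _ (T.E2.mem_of_mem _ he2z)
  · -- commutes with A
    intro a ha
    rw [mul_smul_comm, smul_mul_assoc]
    congr 1
    have h1 : a * T.E2.map (T.e2 * z) = T.E2.map (a * (T.e2 * z)) := by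
      have hb := T.E2.bimodule a (T.hAA1 ha) 1 (one_mem _) (T.e2 * z) he2z
      rw [mul_one, mul_one] at hb
      exact hb.symm
    have h2 : T.E2.map (T.e2 * z) * a = T.E2.map ((T.e2 * z) * a) := by
      have hb := T.E2.bimodule 1 (one_mem _) a (T.hAA1 ha) (T.e2 * z) he2z
      rw [one_mul, one_mul] at hb
      exact hb.symm
    rw [h1, h2]
    congr 1
    calc a * (T.e2 * z) = T.e2 * (a * z) := mul_rot (T.e2_comm a ha).symm z
      _ = T.e2 * (z * a) := by rw [hzc a (T.hAA1 ha)]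
      _ = (T.e2 * z) * a := by rw [mul_assoc]
  · -- rminus w = z
    have hwA1 : (T.τ : ℂ)⁻¹ • T.E2.map (T.e2 * z) ∈ T.A1 :=
      SMulMemClass.smul_mem _ (T.E2.mem_of_mem _ he2z)
    have he2w : T.e2 * ((T.τ : ℂ)⁻¹ • T.E2.map (T.e2 * z)) = T.e2 * z := by
      rw [mul_smul_comm]
      exact (T.pushdown z hzA2).symm
    rw [T.rminus_eq hwA1]
    have hterm : ∀ i : Fin T.nl,
        T.lam i * T.e1 * T.e2 * (((T.τ : ℂ)⁻¹ • T.E2.map (T.e2 * z)) * T.e1 * star (T.lam i))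
        = (T.τ : ℂ) • ((T.lam i * T.e1 * star (T.lam i)) * z) := by
      intro i
      have hstep1 : T.e2 * (((T.τ : ℂ)⁻¹ • T.E2.map (T.e2 * z)) * (T.e1 * star (T.lam i)))
          = T.e2 * (z * (T.e1 * star (T.lam i))) := by
        rw [← mul_assoc, he2w, mul_assoc]
      have hstep2 : z * (T.e1 * star (T.lam i)) = (T.e1 * star (T.lam i)) * z :=
        (hzc _ (mul_mem T.e1_mem (star_mem (T.lam_A1 i)))).symm
      calc T.lam i * T.e1 * T.e2 *
            (((T.τ : ℂ)⁻¹ • T.E2.map (T.e2 * z)) * T.e1 * star (T.lam i))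
          = T.lam i * (T.e1 * (T.e2 * (((T.τ : ℂ)⁻¹ • T.E2.map (T.e2 * z)) *
              (T.e1 * star (T.lam i))))) := by simp only [mul_assoc]
        _ = T.lam i * (T.e1 * (T.e2 * (z * (T.e1 * star (T.lam i))))) := by rw [hstep1]
        _ = T.lam i * (T.e1 * (T.e2 * ((T.e1 * star (T.lam i)) * z))) := by rw [hstep2]
        _ = T.lam i * (T.e1 * (T.e2 * (T.e1 * (star (T.lam i) * z)))) := by
            simp only [mul_assoc]
        _ = T.lam i * ((T.τ : ℂ) • (T.e1 * (star (T.lam i) * z))) := by rw [T.e1e2e1']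
        _ = (T.τ : ℂ) • (T.lam i * (T.e1 * (star (T.lam i) * z))) := by rw [mul_smul_comm]
        _ = (T.τ : ℂ) • ((T.lam i * T.e1 * star (T.lam i)) * z) := by
            simp only [mul_assoc]
    rw [Finset.sum_congr rfl fun i _ => hterm i, ← Finset.smul_sum, ← Finset.sum_mul,
      T.p_one, one_mul, smul_smul, inv_mul_cancel₀ T.tau_ne, one_smul]

end JonesTower

/-- Let `B ⊂ A` be an inclusion of simple unital C*-algebras with a
conditional expectation of index-finite type.  Then the reflection operator `r⁻₁` maps
`A' ∩ A₁` onto `A₁' ∩ A₂`. -/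
theorem statement_12 {C : Type*} [CStarAlgebra C] (T : JonesTower C) :
    T.rminus '' (relativeCommutant T.A T.A1 : Set C)
      = (relativeCommutant T.A1 T.A2 : Set C) := by
  ext z
  constructor
  · rintro ⟨w, hw, rfl⟩
    exact T.rminus_forward hw
  · intro hz
    obtain ⟨w, hw, hrw⟩ := T.rminus_backward hz
    exact ⟨w, hw, hrw⟩
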